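/- The collection of all strong sets of a closure system (V, Q) satisfying (I₀) forms an interval system: it is an algebraic closure system containing ∅ and all singletons, closed under union of intersecting members (I₁), and closed under differences of properly overlapping members (I₂). -/
import Mathlib


variable {V : Type*}

/-- `Q` is a closure system on `V`: it contains `V` and is closed under
intersections of nonempty subfamilies. -/
def IsClosureSystem (Q : Set (Set V)) : Prop :=
  Set.univ ∈ Q ∧ ∀ F ⊆ Q, F.Nonempty → ⋂₀ F ∈ Q

/-- Algebraic: the union of any nonempty chain of closed sets is closed. -/
def IsAlgebraicSystem (Q : Set (Set V)) : Prop :=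
  ∀ C ⊆ Q, C.Nonempty → IsChain (· ⊆ ·) C → ⋃₀ C ∈ Q

/-- Condition (I₀): the empty set and all singletons are closed. -/
def CondI0 (Q : Set (Set V)) : Prop := ∅ ∈ Q ∧ ∀ x : V, {x} ∈ Q

/-- Condition (I₁): the union of two intersecting members is a member. -/
def CondI1 (Q : Set (Set V)) : Prop :=
  ∀ A ∈ Q, ∀ B ∈ Q, (A ∩ B).Nonempty → A ∪ B ∈ Q

/-- Condition (I₂): differences of properly overlapping members are members. -/
def CondI2 (Q : Set (Set V)) : Prop :=
  ∀ A ∈ Q, ∀ B ∈ Q, (A ∩ B).Nonempty → ¬ A ⊆ B → ¬ B ⊆ A → A \ B ∈ Q ∧ B \ A ∈ Q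

/-- An interval system: an algebraic closure system satisfying (I₀), (I₁), (I₂). -/
def IsIntervalSystem (Q : Set (Set V)) : Prop :=
  IsClosureSystem Q ∧ IsAlgebraicSystem Q ∧ CondI0 Q ∧ CondI1 Q ∧ CondI2 Q

/-- `A` is a strong set of the closure system `Q`. -/
def IsStrong (Q : Set (Set V)) (A : Set V) : Prop :=
  A ∈ Q ∧ ∀ B ∈ Q, (A ∩ B).Nonempty → A ⊆ B ∨ B ⊆ A

/-- A decomposition: a partition of `V` (coded as a setoid) all of whose
blocks belong to `Q`.  The refinement order on partitions corresponds to the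
order on `Setoid V` (finer below). -/
def IsDecomp (Q : Set (Set V)) (π : Setoid V) : Prop :=
  ∀ x : V, {y | π.r x y} ∈ Q

/-- The lattice `D(V,Q)` of decompositions, as a subtype of `Setoid V`
with the induced (refinement) partial order. -/
abbrev Decomp (Q : Set (Set V)) := {π : Setoid V // IsDecomp Q π}

/-- The strong sets of a closure system satisfying (I₀) form an interval
system. -/
theorem stmt3 (Q : Set (Set V)) (hC : IsClosureSystem Q) (hA : IsAlgebraicSystem Q)
    (h0 : CondI0 Q) :
    IsIntervalSystem {A : Set V | IsStrong Q A} := by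
  refine ⟨⟨⟨hC.1, fun B _ _ => Or.inr (Set.subset_univ B)⟩, ?_⟩, ?_, ⟨?_, ?_⟩, ?_, ?_⟩
  · -- closed under intersections
    intro F hF hFne
    refine ⟨hC.2 F (fun A hAF => (hF hAF).1) hFne, fun B hB hne => ?_⟩
    obtain ⟨x, hx1, hx2⟩ := hne
    by_cases h : ∃ A ∈ F, A ⊆ B
    · obtain ⟨A, hAF, hAB⟩ := h
      exact Or.inl ((Set.sInter_subset_of_mem hAF).trans hAB)
    · push_neg at h
      refine Or.inr (fun y hy A hAF => ?_)
      have := (hF hAF).2 B hB ⟨x, hx1 A hAF, hx2⟩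
      exact (this.resolve_left (h A hAF)) hy
  · -- algebraic
    intro C hCQ hCne hchain
    refine ⟨hA C (fun A hAC => (hCQ hAC).1) hCne hchain, fun B hB hne => ?_⟩
    obtain ⟨x, hx1, hx2⟩ := hne
    obtain ⟨A, hAC, hxA⟩ := hx1
    by_cases h : ∀ A' ∈ C, A' ⊆ B
    · exact Or.inl (Set.sUnion_subset h)
    · push_neg at h
      obtain ⟨A', hA'C, hA'B⟩ := h
      refine Or.inr ?_
      rcases hchain.total hAC hA'C with hAA' | hA'A
      · have := (hCQ hA'C).2 B hB ⟨x, hAA' hxA, hx2⟩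
        exact (this.resolve_left hA'B).trans (Set.subset_sUnion_of_mem hA'C)
      · rcases (hCQ hAC).2 B hB ⟨x, hxA, hx2⟩ with h1 | h1
        · exact absurd (hA'A.trans h1) hA'B
        · exact h1.trans (Set.subset_sUnion_of_mem hAC)
  · exact ⟨h0.1, fun B _ h => absurd h (by simp)⟩
  · intro x
    refine ⟨h0.2 x, fun B hB hne => ?_⟩
    obtain ⟨y, hy1, hy2⟩ := hne
    rcases hy1 with rfl
    exact Or.inl (Set.singleton_subset_iff.2 hy2)
  · -- I1
    intro A hAs B hBs hne
    rcases hAs.2 B hBs.1 hne with h | h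
    · rwa [Set.union_eq_self_of_subset_left h]
    · rwa [Set.union_eq_self_of_subset_right h]
  · -- I2
    intro A hAs B hBs hne hnAB hnBA
    rcases hAs.2 B hBs.1 hne with h | h
    · exact absurd h hnAB
    · exact absurd h hnBA
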